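/- arXiv:2203.06423 — 3 statements merged into one kernel-verified Lean document; each statement's English description precedes it below -/
import Mathlib

section
/- Let G be a {P3 ∪ P2, 2K1 + Kp}-free graph with p ≥ 2. If the subgraph induced by C_{1,2} (the vertices nonadjacent to both v1 and v2 of a maximum clique) has clique number at least 2p, then χ(G) = ω(G). -/
open SimpleGraph

/-- The join of two graphs: all cross edges present. -/
def joinG {α β : Type*} (G : SimpleGraph α) (H : SimpleGraph β) : SimpleGraph (α ⊕ β) :=
  SimpleGraph.fromRel (fun x y => match x, y with
    | Sum.inl a, Sum.inl b => G.Adj a b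
    | Sum.inr a, Sum.inr b => H.Adj a b
    | Sum.inl _, Sum.inr _ => True
    | _, _ => False)

/-- The graph `P₃ ∪ P₂`: disjoint union of a path on 3 vertices and an edge. -/
def P3P2 : SimpleGraph (Fin 3 ⊕ Fin 2) := pathGraph 3 ⊕g pathGraph 2

/-- The graph `K₁ ∪ K₂`: disjoint union of a vertex and an edge. -/
def K1K2 : SimpleGraph (Fin 1 ⊕ Fin 2) := (⊥ : SimpleGraph (Fin 1)) ⊕g (⊤ : SimpleGraph (Fin 2))

/-- The graph `(K₁ ∪ K₂) + Kₚ`: join of `K₁ ∪ K₂` with a complete graph on `p` vertices. -/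
def K1K2Kp (p : ℕ) : SimpleGraph ((Fin 1 ⊕ Fin 2) ⊕ Fin p) := joinG K1K2 (⊤ : SimpleGraph (Fin p))

/-- The graph `2K₁ + Kₚ`: join of two isolated vertices with a complete graph on `p` vertices. -/
def twoK1Kp (p : ℕ) : SimpleGraph (Fin 2 ⊕ Fin p) :=
  joinG (⊥ : SimpleGraph (Fin 2)) (⊤ : SimpleGraph (Fin p))

/-- The HVN graph: `(K₁ ∪ K₂) + K₂`. -/
def HVN : SimpleGraph ((Fin 1 ⊕ Fin 2) ⊕ Fin 2) := K1K2Kp 2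

/-- The diamond: `2K₁ + K₂`, i.e. `K₄` minus an edge. -/
def diamond : SimpleGraph (Fin 2 ⊕ Fin 2) := twoK1Kp 2

/-- The paw: `(K₁ ∪ K₂) + K₁`. -/
def paw : SimpleGraph ((Fin 1 ⊕ Fin 2) ⊕ Fin 1) := K1K2Kp 1

/-- `G` is `H`-free if it has no induced subgraph isomorphic to `H`,
i.e. there is no graph embedding of `H` into `G`. -/
def Free {α β : Type*} (H : SimpleGraph α) (G : SimpleGraph β) : Prop :=
  ¬ Nonempty (H ↪g G)

lemma twoK1Kp_adj_inl_inl {p : ℕ} (i j : Fin 2) :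
    ¬ (twoK1Kp p).Adj (Sum.inl i) (Sum.inl j) := by
  simp [twoK1Kp, joinG, SimpleGraph.fromRel_adj]

lemma twoK1Kp_adj_inl_inr {p : ℕ} (i : Fin 2) (j : Fin p) :
    (twoK1Kp p).Adj (Sum.inl i) (Sum.inr j) := by
  simp [twoK1Kp, joinG, SimpleGraph.fromRel_adj]

lemma twoK1Kp_adj_inr_inr {p : ℕ} (i j : Fin p) :
    (twoK1Kp p).Adj (Sum.inr i) (Sum.inr j) ↔ i ≠ j := by
  constructor
  · rintro h rfl; exact h.ne rfl
  · intro h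
    simp only [twoK1Kp, joinG, SimpleGraph.fromRel_adj]
    exact ⟨by simpa using h, Or.inl (by simpa using h)⟩

lemma no2K1Kp {V : Type*} {G : SimpleGraph V} {p : ℕ}
    (hf2 : _root_.Free (twoK1Kp p) G) {x y : V} (hne : x ≠ y) (hxy : ¬ G.Adj x y)
    {K : Finset V} (hK : G.IsClique K) (hcard : p ≤ K.card)
    (hxK : ∀ k ∈ K, G.Adj x k) (hyK : ∀ k ∈ K, G.Adj y k) : False := by
  classical
  obtain ⟨K', hK'sub, hK'card⟩ := K.exists_subset_card_eq hcard
  have hK' : G.IsClique K' := hK.subset (by exact_mod_cast hK'sub)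
  have hxK' : ∀ k ∈ K', G.Adj x k := fun k hk => hxK k (hK'sub hk)
  have hyK' : ∀ k ∈ K', G.Adj y k := fun k hk => hyK k (hK'sub hk)
  have e : ↥K' ≃ Fin p := K'.equivFinOfCardEq hK'card
  set f : Fin 2 ⊕ Fin p → V := fun z =>
    match z with
    | Sum.inl i => if i = 0 then x else y
    | Sum.inr j => ((e.symm j : ↥K') : V) with hf
  have hfl : ∀ i : Fin 2, f (Sum.inl i) = x ∨ f (Sum.inl i) = y := by
    intro i
    by_cases h : i = 0 <;> simp [hf, h]
  have hmem : ∀ j : Fin p, f (Sum.inr j) ∈ K' := fun j => (e.symm j).2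
  have hlr : ∀ (i : Fin 2) (j : Fin p), G.Adj (f (Sum.inl i)) (f (Sum.inr j)) := by
    intro i j
    rcases hfl i with h | h <;> rw [h]
    · exact hxK' _ (hmem j)
    · exact hyK' _ (hmem j)
  have hval : ∀ j j' : Fin p, f (Sum.inr j) = f (Sum.inr j') ↔ j = j' := by
    intro j j'
    constructor
    · intro h
      have : (e.symm j : ↥K') = e.symm j' := Subtype.ext h
      simpa using congrArg e this
    · rintro rfl; rfl
  have hll : ∀ i i' : Fin 2, ¬ G.Adj (f (Sum.inl i)) (f (Sum.inl i')) := by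
    intro i i'
    rcases hfl i with h | h <;> rcases hfl i' with h' | h' <;> rw [h, h']
    · exact G.irrefl
    · exact hxy
    · exact fun hc => hxy hc.symm
    · exact G.irrefl
  have hinj : Function.Injective f := by
    rintro (i | j) (i' | j') h
    · by_cases h0 : i = 0 <;> by_cases h0' : i' = 0
      · rw [h0, h0']
      · rw [hf] at h; simp only [h0, h0', if_pos, if_neg, if_true, if_false] at h
        exact absurd h hne
      · rw [hf] at h; simp only [h0, h0', if_pos, if_neg, if_true, if_false] at h
        exact absurd h.symm hne
      · congr 1; omega
    · exact absurd (h ▸ hlr i j') G.irrefl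
    · exact absurd (h ▸ (hlr i' j).symm) G.irrefl
    · rw [(hval j j').mp h]
  refine hf2 ⟨⟨⟨f, hinj⟩, ?_⟩⟩
  rintro (i | j) (i' | j')
  · simp only [Function.Embedding.coeFn_mk]
    exact iff_of_false (hll i i') (twoK1Kp_adj_inl_inl i i')
  · simp only [Function.Embedding.coeFn_mk]
    exact iff_of_true (hlr i j') (twoK1Kp_adj_inl_inr i j')
  · simp only [Function.Embedding.coeFn_mk]
    exact iff_of_true (hlr i' j).symm ((twoK1Kp_adj_inl_inr i' j).symm)
  · simp only [Function.Embedding.coeFn_mk]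
    rw [twoK1Kp_adj_inr_inr]
    constructor
    · intro h hjj
      exact G.irrefl (((hval j j').mpr hjj) ▸ h)
    · intro h
      have hne' : f (Sum.inr j) ≠ f (Sum.inr j') := fun hc => h ((hval j j').mp hc)
      exact hK' (hmem j) (hmem j') hne'
lemma p3p2_ll (u v : Fin 3) :
    P3P2.Adj (Sum.inl u) (Sum.inl v) ↔ (u.val + 1 = v.val ∨ v.val + 1 = u.val) := by
  simp [P3P2, pathGraph_adj]

lemma p3p2_lr (u : Fin 3) (v : Fin 2) : ¬ P3P2.Adj (Sum.inl u) (Sum.inr v) := by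
  simp [P3P2]

lemma p3p2_rl (u : Fin 2) (v : Fin 3) : ¬ P3P2.Adj (Sum.inr u) (Sum.inl v) := by
  simp [P3P2]

lemma p3p2_rr (u v : Fin 2) :
    P3P2.Adj (Sum.inr u) (Sum.inr v) ↔ (u.val + 1 = v.val ∨ v.val + 1 = u.val) := by
  simp [P3P2, pathGraph_adj]

lemma noP3P2 {V : Type*} {G : SimpleGraph V} (hf1 : _root_.Free P3P2 G)
    {a b c d e : V} (hab : G.Adj a b) (hbc : G.Adj b c) (hac : ¬ G.Adj a c) (hace : a ≠ c)
    (hde : G.Adj d e)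
    (had : ¬G.Adj a d) (hae : ¬G.Adj a e) (hbd : ¬G.Adj b d) (hbe : ¬G.Adj b e)
    (hcd : ¬G.Adj c d) (hce : ¬G.Adj c e)
    (nad : a ≠ d) (nae : a ≠ e) (nbd : b ≠ d) (nbe : b ≠ e) (ncd : c ≠ d) (nce : c ≠ e) :
    False := by
  classical
  have hba := hab.symm
  have hcb := hbc.symm
  have hca : ¬ G.Adj c a := fun h => hac h.symm
  have hed := hde.symm
  have nab := hab.ne
  have nbc := hbc.ne
  have nde := hde.ne
  have nda := nad.symm; have nea := nae.symm; have ndb := nbd.symm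
  have neb := nbe.symm; have ndc := ncd.symm; have nec := nce.symm
  have nba := nab.symm; have ncb := nbc.symm; have nca := hace.symm
  have ned := nde.symm
  have hda : ¬ G.Adj d a := fun h => had h.symm
  have hdb : ¬ G.Adj d b := fun h => hbd h.symm
  have hdc : ¬ G.Adj d c := fun h => hcd h.symm
  have hea : ¬ G.Adj e a := fun h => hae h.symm
  have heb : ¬ G.Adj e b := fun h => hbe h.symm
  have hec : ¬ G.Adj e c := fun h => hce h.symm
  let f : Fin 3 ⊕ Fin 2 → V := fun z =>
    match z with
    | Sum.inl i => if i.val = 0 then a else if i.val = 1 then b else c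
    | Sum.inr j => if j.val = 0 then d else e
  have hinj : Function.Injective f := by
    rintro (i | j) (i' | j') h
    · fin_cases i <;> fin_cases i' <;> simp only [f] at h <;> norm_num at h <;>
        first | rfl | exact absurd h (by assumption)
    · fin_cases i <;> fin_cases j' <;> simp only [f] at h <;> norm_num at h <;>
        exact absurd h (by assumption)
    · fin_cases j <;> fin_cases i' <;> simp only [f] at h <;> norm_num at h <;>
        exact absurd h (by assumption)
    · fin_cases j <;> fin_cases j' <;> simp only [f] at h <;> norm_num at h <;>
        first | rfl | exact absurd h (by assumption)
  refine hf1 ⟨⟨⟨f, hinj⟩, ?_⟩⟩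
  rintro (i | j) (i' | j')
  · fin_cases i <;> fin_cases i' <;>
      simp only [Function.Embedding.coeFn_mk, p3p2_ll, f] <;> norm_num <;>
      first | assumption | exact G.irrefl
  · fin_cases i <;> fin_cases j' <;>
      simp only [Function.Embedding.coeFn_mk, f] <;>
      (refine iff_of_false ?_ (p3p2_lr _ _)) <;> norm_num <;> assumption
  · fin_cases j <;> fin_cases i' <;>
      simp only [Function.Embedding.coeFn_mk, f] <;>
      (refine iff_of_false ?_ (p3p2_rl _ _)) <;> norm_num <;> assumption
  · fin_cases j <;> fin_cases j' <;>
      simp only [Function.Embedding.coeFn_mk, p3p2_rr, f] <;> norm_num <;>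
      first | assumption | exact G.irrefl

theorem stmt_17 {V : Type*} [Fintype V] (G : SimpleGraph V) (p : ℕ) (hp : 2 ≤ p)
    (hf1 : _root_.Free P3P2 G) (hf2 : _root_.Free (twoK1Kp p) G)
    (A : Set V) (hA : G.IsClique A) (hAmax : A.ncard = G.cliqueNum)
    (v1 v2 : V) (hv1 : v1 ∈ A) (hv2 : v2 ∈ A) (hne : v1 ≠ v2)
    (hC : 2 * p ≤ (G.induce {x | x ∉ A ∧ ¬ G.Adj x v1 ∧ ¬ G.Adj x v2}).cliqueNum) :
    G.chromaticNumber = (G.cliqueNum : ℕ∞) := by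
  classical
  set ω := G.cliqueNum with hωdef
  have h12 : G.Adj v1 v2 := hA hv1 hv2 hne
  set Cset : Set V := {x | x ∉ A ∧ ¬ G.Adj x v1 ∧ ¬ G.Adj x v2} with hCsetdef
  set A' : Finset V := (Set.toFinite A).toFinset with hA'def
  have hmemA : ∀ x, x ∈ A' ↔ x ∈ A := fun x => Set.Finite.mem_toFinset _
  have hv1A' : v1 ∈ A' := (hmemA v1).mpr hv1
  have hv2A' : v2 ∈ A' := (hmemA v2).mpr hv2
  have hA' : G.IsClique (A' : Set V) := by
    rw [hA'def, Set.Finite.coe_toFinset]; exact hA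
  have hcardA : A'.card = ω := by
    rw [hA'def, ← Set.ncard_eq_toFinset_card]; exact hAmax
  have hKle : ∀ K : Finset V, G.IsClique (K : Set V) → K.card ≤ ω :=
    fun K h => h.card_le_cliqueNum
  set C' : Finset V := (Set.toFinite Cset).toFinset with hC'def
  have hmemC : ∀ x, x ∈ C' ↔ (x ∉ A ∧ ¬ G.Adj x v1 ∧ ¬ G.Adj x v2) :=
    fun x => Set.Finite.mem_toFinset _
  have hAC : ∀ x ∈ C', x ∉ A' := by
    intro x hx hxA
    exact ((hmemC x).mp hx).1 ((hmemA x).mp hxA)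
  have hCv : ∀ x ∈ C', ∀ w ∈ A', x ≠ w := by
    intro x hx w hw h
    exact hAC x hx (h ▸ hw)
  obtain ⟨X, hXC, hXclique, hXcard⟩ :
      ∃ X : Finset V, (X : Set V) ⊆ Cset ∧ G.IsClique (X : Set V) ∧ X.card = 2 * p := by
    obtain ⟨s, hs⟩ := (G.induce Cset).exists_isNClique_cliqueNum
    obtain ⟨s', hsub, hcard⟩ := s.exists_subset_card_eq (hs.card_eq ▸ hC)
    refine ⟨s'.image Subtype.val, ?_, ?_, ?_⟩
    · intro x hx
      simp only [Finset.coe_image, Set.mem_image, Finset.mem_coe] at hx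
      obtain ⟨u, _, rfl⟩ := hx
      exact u.2
    · rintro x hx y hy hxy
      simp only [Finset.coe_image, Set.mem_image, Finset.mem_coe] at hx hy
      obtain ⟨u, hu, rfl⟩ := hx
      obtain ⟨w, hw, rfl⟩ := hy
      have : (G.induce Cset).Adj u w := hs.isClique.subset (by exact_mod_cast hsub) hu hw
        (fun hc => hxy (congrArg _ hc))
      exact this
    · rw [Finset.card_image_of_injective _ Subtype.val_injective, hcard]
  have hω2p : 2 * p ≤ ω := by
    rw [← hXcard]; exact hKle X hXclique
  obtain ⟨x0, hx0X⟩ : ∃ x0, x0 ∈ X := by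
    apply Finset.card_pos.mp; omega
  have hXmemC : ∀ x ∈ X, x ∈ C' := by
    intro x hx
    rw [hmemC]
    exact hXC (Finset.mem_coe.mpr hx)
  have hx0C : x0 ∈ C' := hXmemC x0 hx0X
  -- adjacency in C is transitive
  have hCfacts : ∀ x ∈ C', ¬ G.Adj x v1 ∧ ¬ G.Adj v1 x ∧ ¬ G.Adj x v2 ∧ ¬ G.Adj v2 x ∧
      x ≠ v1 ∧ x ≠ v2 := by
    intro x hx
    obtain ⟨h1, h2, h3⟩ := (hmemC x).mp hx
    exact ⟨h2, fun h => h2 h.symm, h3, fun h => h3 h.symm,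
      fun h => h1 (h ▸ hv1), fun h => h1 (h ▸ hv2)⟩
  have hclus : ∀ x ∈ C', ∀ y ∈ C', ∀ z ∈ C', G.Adj x y → G.Adj y z → x ≠ z → G.Adj x z := by
    intro x hx y hy z hz hxy hyz hxz
    by_contra hnadj
    obtain ⟨x1, x2, x3, x4, x5, x6⟩ := hCfacts x hx
    obtain ⟨y1, y2, y3, y4, y5, y6⟩ := hCfacts y hy
    obtain ⟨z1, z2, z3, z4, z5, z6⟩ := hCfacts z hz
    exact noP3P2 hf1 hxy hyz hnadj hxz h12 x1 x3 y1 y3 z1 z3 x5 x6 y5 y6 z5 z6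
  -- classes
  set cls : V → Finset V := fun y => C'.filter (fun z => z = y ∨ G.Adj z y) with hclsdef
  have hclsmem : ∀ y z, z ∈ cls y ↔ z ∈ C' ∧ (z = y ∨ G.Adj z y) := by
    intro y z; rw [hclsdef]; exact Finset.mem_filter
  have hclssub : ∀ y, cls y ⊆ C' := fun y => Finset.filter_subset _ _
  have hself : ∀ y ∈ C', y ∈ cls y := by
    intro y hy; rw [hclsmem]; exact ⟨hy, Or.inl rfl⟩
  have hclsclique : ∀ y ∈ C', G.IsClique (cls y : Set V) := by
    intro y hy z hz w hw hzw
    rw [Finset.mem_coe, hclsmem] at hz hw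
    obtain ⟨hzC, hz'⟩ := hz
    obtain ⟨hwC, hw'⟩ := hw
    rcases hz' with rfl | hz' <;> rcases hw' with rfl | hw'
    · exact absurd rfl hzw
    · exact hw'.symm
    · exact hz'
    · exact hclus z hzC y hy w hwC hz' hw'.symm hzw
  have hclseq : ∀ y ∈ C', ∀ z ∈ cls y, cls z = cls y := by
    intro y hy z hz
    rw [hclsmem] at hz
    obtain ⟨hzC, hz'⟩ := hz
    ext w
    rw [hclsmem, hclsmem]
    constructor
    · rintro ⟨hwC, (rfl | hw)⟩
      · exact ⟨hwC, hz'⟩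
      · refine ⟨hwC, ?_⟩
        rcases hz' with rfl | hz'
        · exact Or.inr hw
        · by_cases hwy : w = y
          · exact Or.inl hwy
          · exact Or.inr (hclus w hwC z hzC y hy hw hz' hwy)
    · rintro ⟨hwC, (rfl | hw)⟩
      · rcases hz' with rfl | hz'
        · exact ⟨hwC, Or.inl rfl⟩
        · exact ⟨hwC, Or.inr hz'.symm⟩
      · refine ⟨hwC, ?_⟩
        rcases hz' with rfl | hz'
        · exact Or.inr hw
        · by_cases hwz : w = z
          · exact Or.inl hwz
          · exact Or.inr (hclus w hwC y hy z hzC hw hz'.symm hwz)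
  have hclsnadj : ∀ y ∈ C', ∀ z ∈ C', cls z ≠ cls y → ¬ G.Adj z y := by
    intro y hy z hz hnecls hadj
    exact hnecls (hclseq y hy z ((hclsmem y z).mpr ⟨hz, Or.inr hadj⟩))
  set D : Finset V := cls x0 with hDdef
  have hDC : D ⊆ C' := hclssub x0
  have hDclique : G.IsClique (D : Set V) := hclsclique x0 hx0C
  have hd : 2 * p ≤ D.card := by
    rw [← hXcard]
    apply Finset.card_le_card
    intro x hx
    rw [hDdef, hclsmem]
    refine ⟨hXmemC x hx, ?_⟩
    by_cases hxx : x = x0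
    · exact Or.inl hxx
    · exact Or.inr (hXclique (Finset.mem_coe.mpr hx) (Finset.mem_coe.mpr hx0X) hxx)
  -- common-neighbourhood smallness
  have hcsmall : ∀ x y : V, x ≠ y → ¬ G.Adj x y → ∀ K : Finset V, G.IsClique (K : Set V) →
      (∀ k ∈ K, G.Adj x k) → (∀ k ∈ K, G.Adj y k) → K.card < p := by
    intro x y hxy hnadj K hK hx hy
    by_contra h
    exact no2K1Kp hf2 hxy hnadj hK (not_lt.mp h) hx hy
  have hadjcom : ∀ K : Finset V, G.IsClique (K : Set V) → p ≤ K.card → ∀ u w, u ≠ w →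
      (∀ k ∈ K, G.Adj u k) → (∀ k ∈ K, G.Adj w k) → G.Adj u w := by
    intro K hK hcard u w huw hu hw
    by_contra h
    exact absurd hcard (not_le.mpr (hcsmall u w huw h K hK hu hw))
  -- a vertex with a non-neighbour in a clique has < p neighbours in it
  have hpartial : ∀ K : Finset V, G.IsClique (K : Set V) → ∀ u k, k ∈ K → ¬ G.Adj u k → u ≠ k →
      (K.filter (G.Adj u ·)).card < p := by
    intro K hK u k hkK hnadj hne'
    refine hcsmall u k hne' hnadj _ (hK.subset ?_) ?_ ?_
    · exact_mod_cast K.filter_subset _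
    · intro j hj
      exact (Finset.mem_filter.mp hj).2
    · intro j hj
      obtain ⟨hjK, hadj⟩ := Finset.mem_filter.mp hj
      have hjk : j ≠ k := fun h => hnadj (h ▸ hadj)
      exact (hK hjK hkK hjk).symm
  -- each vertex of C has < p neighbours in A
  have hL1 : ∀ b ∈ C', (A'.filter (G.Adj b ·)).card < p := by
    intro b hb
    obtain ⟨b1, b2, b3, b4, b5, b6⟩ := hCfacts b hb
    refine hcsmall v1 b (Ne.symm b5) b2 _ (hA'.subset ?_) ?_ ?_
    · exact_mod_cast A'.filter_subset _
    · intro k hk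
      obtain ⟨hkA, hadj⟩ := Finset.mem_filter.mp hk
      have hkv : k ≠ v1 := fun h => b1 (h ▸ hadj)
      exact (hA' (Finset.mem_coe.mpr hkA) (Finset.mem_coe.mpr ((hmemA v1).mpr hv1))
        hkv).symm
    · intro k hk
      exact (Finset.mem_filter.mp hk).2
  -- A is a maximum clique: every vertex outside has a non-neighbour in A
  have hext : ∀ u, u ∉ A' → ∃ a ∈ A', ¬ G.Adj u a ∧ u ≠ a := by
    intro u huA
    by_contra hno
    push_neg at hno
    have hall : ∀ a ∈ A', a ≠ u → G.Adj u a := by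
      intro a ha hau
      by_contra hnadj
      exact hau.symm (hno a ha hnadj)
    have hclq : G.IsClique ((insert u A' : Finset V) : Set V) := by
      rw [Finset.coe_insert]
      exact hA'.insert (fun b hb hbu => hall b (Finset.mem_coe.mp hb) (Ne.symm hbu))
    have := hKle _ hclq
    rw [Finset.card_insert_of_notMem huA, hcardA] at this
    omega
  set R' : Finset V := (Finset.univ \ A') \ C' with hR'def
  have hmemR : ∀ u, u ∈ R' ↔ (u ∉ A' ∧ u ∉ C') := by
    intro u
    rw [hR'def]
    simp [Finset.mem_sdiff]
  have hRv : ∀ u ∈ R', G.Adj u v1 ∨ G.Adj u v2 := by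
    intro u hu
    obtain ⟨huA, huC⟩ := (hmemR u).mp hu
    by_contra hno
    push_neg at hno
    exact huC ((hmemC u).mpr ⟨fun h => huA ((hmemA u).mpr h), hno.1, hno.2⟩)
  have hRC : ∀ u ∈ R', u ∉ C' := fun u hu => ((hmemR u).mp hu).2
  have hRnA : ∀ u ∈ R', u ∉ A' := fun u hu => ((hmemR u).mp hu).1
  -- every vertex of R is complete to D
  have hRD : ∀ u ∈ R', ∀ b ∈ D, G.Adj u b := by
    intro u hu
    by_contra hnc
    push_neg at hnc
    obtain ⟨bs, hbsD, hbs⟩ := hnc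
    have huA : u ∉ A' := hRnA u hu
    have huC : u ∉ C' := hRC u hu
    have hubs : u ≠ bs := fun h => huC (h ▸ hDC hbsD)
    have hsmall : (D.filter (G.Adj u ·)).card < p := hpartial D hDclique u bs hbsD hbs hubs
    have hsplit := Finset.card_filter_add_card_filter_not (s := D)
      (p := fun b => G.Adj u b)
    have hcnt : 1 < (D.filter (fun b => ¬ G.Adj u b)).card := by omega
    obtain ⟨b1, hb1, b2, hb2, hb12⟩ := Finset.one_lt_card.mp hcnt
    obtain ⟨hb1D, hb1n⟩ := Finset.mem_filter.mp hb1
    obtain ⟨hb2D, hb2n⟩ := Finset.mem_filter.mp hb2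
    have hb1C := hDC hb1D
    have hb2C := hDC hb2D
    obtain ⟨c11, c12, c13, c14, c15, c16⟩ := hCfacts b1 hb1C
    obtain ⟨c21, c22, c23, c24, c25, c26⟩ := hCfacts b2 hb2C
    have hub1 : u ≠ b1 := fun h => huC (h ▸ hb1C)
    have hub2 : u ≠ b2 := fun h => huC (h ▸ hb2C)
    have hadjb12 : G.Adj b1 b2 :=
      hDclique (Finset.mem_coe.mpr hb1D) (Finset.mem_coe.mpr hb2D) hb12
    by_cases hu1 : G.Adj u v1 <;> by_cases hu2 : G.Adj u v2
    · -- u adjacent to both v1 and v2 : the Z-argument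
      set Z := A'.filter (fun a => ¬ G.Adj u a) with hZdef
      have hv1Z : v1 ∉ Z := fun h => (Finset.mem_filter.mp h).2 hu1
      have hZAW : ∀ a ∈ Z, ∀ b ∈ D, G.Adj a b := by
        intro a haZ
        obtain ⟨haA, hnua⟩ := Finset.mem_filter.mp haZ
        by_contra hnc2
        push_neg at hnc2
        obtain ⟨b', hb'D, hnab'⟩ := hnc2
        have hab' : a ≠ b' := (hCv b' (hDC hb'D) a haA).symm
        have hsa : (D.filter (G.Adj a ·)).card < p := hpartial D hDclique a b' hb'D hnab' hab'
        have hsub2 : D.filter (fun b => ¬ G.Adj u b) ⊆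
            (D.filter (fun b => ¬ G.Adj u b ∧ ¬ G.Adj a b)) ∪ (D.filter (G.Adj a ·)) := by
          intro b hb
          obtain ⟨hbD, hbn⟩ := Finset.mem_filter.mp hb
          by_cases h : G.Adj a b
          · exact Finset.mem_union_right _ (Finset.mem_filter.mpr ⟨hbD, h⟩)
          · exact Finset.mem_union_left _ (Finset.mem_filter.mpr ⟨hbD, hbn, h⟩)
        have hcu := Finset.card_le_card hsub2
        have hcu2 := Finset.card_union_le
          (D.filter (fun b => ¬ G.Adj u b ∧ ¬ G.Adj a b)) (D.filter (G.Adj a ·))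
        obtain ⟨d1, hd1, d2, hd2, hd12⟩ := Finset.one_lt_card.mp
          (by omega : 1 < (D.filter (fun b => ¬ G.Adj u b ∧ ¬ G.Adj a b)).card)
        obtain ⟨hd1D, hd1nu, hd1na⟩ := Finset.mem_filter.mp hd1
        obtain ⟨hd2D, hd2nu, hd2na⟩ := Finset.mem_filter.mp hd2
        obtain ⟨e11, e12, e13, e14, e15, e16⟩ := hCfacts d1 (hDC hd1D)
        obtain ⟨e21, e22, e23, e24, e25, e26⟩ := hCfacts d2 (hDC hd2D)
        have hav1 : a ≠ v1 := fun h => hv1Z (h ▸ haZ)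
        have haadj : G.Adj a v1 :=
          hA' (Finset.mem_coe.mpr haA) (Finset.mem_coe.mpr hv1A') hav1
        exact noP3P2 hf1 haadj hu1.symm (fun h => hnua h.symm) (fun h => huA (h ▸ haA))
          (hDclique (Finset.mem_coe.mpr hd1D) (Finset.mem_coe.mpr hd2D) hd12)
          hd1na hd2na e12 e22 hd1nu hd2nu
          ((hCv d1 (hDC hd1D) a haA).symm) ((hCv d2 (hDC hd2D) a haA).symm)
          e15.symm e25.symm (fun h => huC (h ▸ hDC hd1D)) (fun h => huC (h ▸ hDC hd2D))
      have hZcard : Z.card < p := by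
        refine lt_of_le_of_lt (Finset.card_le_card ?_) (hL1 bs (hDC hbsD))
        intro a haZ
        obtain ⟨haA, _⟩ := Finset.mem_filter.mp haZ
        exact Finset.mem_filter.mpr ⟨haA, (hZAW a haZ bs hbsD).symm⟩
      have hsplitA := Finset.card_filter_add_card_filter_not (s := A')
        (p := fun a => G.Adj u a)
      have hZne : Z.Nonempty := by
        obtain ⟨a, haA, hnadj', hne'⟩ := hext u huA
        exact ⟨a, Finset.mem_filter.mpr ⟨haA, hnadj'⟩⟩
      obtain ⟨z, hzZ⟩ := hZne
      obtain ⟨hzA, hnuz⟩ := Finset.mem_filter.mp hzZ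
      have hKsmall : (A'.filter (fun a => G.Adj u a)).card < p := by
        refine hcsmall u z (fun h => huA (h ▸ hzA)) hnuz _ (hA'.subset ?_) ?_ ?_
        · exact_mod_cast A'.filter_subset _
        · intro k hk; exact (Finset.mem_filter.mp hk).2
        · intro k hk
          obtain ⟨hkA, hadjk⟩ := Finset.mem_filter.mp hk
          have hzk : z ≠ k := fun h => hnuz (h ▸ hadjk)
          exact hA' (Finset.mem_coe.mpr hzA) (Finset.mem_coe.mpr hkA) hzk
      rw [hcardA] at hsplitA
      rw [← hZdef] at hsplitA
      omega
    · -- u adjacent to v1 only : P3 = (v2, v1, u) plus edge (b1, b2)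
      exact noP3P2 hf1 h12.symm hu1.symm (fun h => hu2 h.symm) (fun h => huA (h ▸ hv2A'))
        hadjb12 c14 c24 c12 c22 hb1n hb2n
        c16.symm c26.symm c15.symm c25.symm hub1 hub2
    · -- u adjacent to v2 only : P3 = (v1, v2, u) plus edge (b1, b2)
      exact noP3P2 hf1 h12 hu2.symm (fun h => hu1 h.symm) (fun h => huA (h ▸ hv1A'))
        hadjb12 c12 c22 c14 c24 hb1n hb2n
        c15.symm c25.symm c16.symm c26.symm hub1 hub2
    · exact (hRv u hu).elim (fun h => hu1 h) (fun h => hu2 h)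
  set AW : Finset V := A'.filter (fun a => ∀ b ∈ D, G.Adj a b) with hAWdef
  have hpd : p ≤ D.card := by omega
  have hAWsub : AW ⊆ A' := Finset.filter_subset _ _
  have hAWcomp : ∀ a ∈ AW, ∀ b ∈ D, G.Adj a b := fun a ha => (Finset.mem_filter.mp ha).2
  -- D ∪ R' ∪ AW is a clique
  have hQ : D.card + R'.card + AW.card ≤ ω := by
    have hcomp : ∀ w, (w ∈ R' ∨ w ∈ AW) → ∀ b ∈ D, G.Adj w b := by
      rintro w (hw | hw) b hb
      · exact hRD w hw b hb
      · exact hAWcomp w hw b hb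
    have hcompadj : ∀ x y, (x ∈ R' ∨ x ∈ AW) → (y ∈ R' ∨ y ∈ AW) → x ≠ y → G.Adj x y :=
      fun x y hx hy hxy =>
        hadjcom D hDclique hpd x y hxy (hcomp x hx) (hcomp y hy)
    have hQclq : G.IsClique ((D ∪ R' ∪ AW : Finset V) : Set V) := by
      intro x hx y hy hxy
      rw [Finset.mem_coe, Finset.mem_union, Finset.mem_union] at hx hy
      rcases hx with (hx | hx) | hx <;> rcases hy with (hy | hy) | hy
      · exact hDclique (Finset.mem_coe.mpr hx) (Finset.mem_coe.mpr hy) hxy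
      · exact (hcomp y (Or.inl hy) x hx).symm
      · exact (hcomp y (Or.inr hy) x hx).symm
      · exact hcomp x (Or.inl hx) y hy
      · exact hcompadj x y (Or.inl hx) (Or.inl hy) hxy
      · exact hcompadj x y (Or.inl hx) (Or.inr hy) hxy
      · exact hcomp x (Or.inr hx) y hy
      · exact hcompadj x y (Or.inr hx) (Or.inl hy) hxy
      · exact hA' (Finset.mem_coe.mpr (hAWsub hx)) (Finset.mem_coe.mpr (hAWsub hy)) hxy
    have hDR : Disjoint D R' := by
      rw [Finset.disjoint_left]
      exact fun {a} haD haR => hRC a haR (hDC haD)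
    have hDRAW : Disjoint (D ∪ R') AW := by
      rw [Finset.disjoint_left]
      intro a ha haAW
      rcases Finset.mem_union.mp ha with h | h
      · exact hAC a (hDC h) (hAWsub haAW)
      · exact hRnA a h (hAWsub haAW)
    have := hKle _ hQclq
    rwa [Finset.card_union_of_disjoint hDRAW, Finset.card_union_of_disjoint hDR] at this
  -- every vertex of R has < p neighbours in A
  have hRA : ∀ r ∈ R', (A'.filter (G.Adj r ·)).card < p := by
    intro r hr
    obtain ⟨a, haA, hnadj', hne'⟩ := hext r (hRnA r hr)
    refine hcsmall r a hne' hnadj' _ (hA'.subset ?_) ?_ ?_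
    · exact_mod_cast A'.filter_subset _
    · intro k hk; exact (Finset.mem_filter.mp hk).2
    · intro k hk
      obtain ⟨hkA, hadjk⟩ := Finset.mem_filter.mp hk
      have hak : a ≠ k := fun h => hnadj' (h ▸ hadjk)
      exact hA' (Finset.mem_coe.mpr haA) (Finset.mem_coe.mpr hkA) hak
  -- vertices of A ∖ AW meeting a class ≠ D are complete to it
  have hclsD : ∀ b ∈ D, cls b = D := by
    intro b hb
    rw [hDdef]
    exact hclseq x0 hx0C b (hDdef ▸ hb)
  have hL12 : ∀ y ∈ C', cls y ≠ D → ∀ a ∈ A', a ∉ AW →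
      (∃ e1 ∈ cls y, G.Adj a e1) → ∀ e2 ∈ cls y, G.Adj a e2 := by
    intro y hy hney a haA hanAW hex e2 he2
    obtain ⟨e1, he1, hae1⟩ := hex
    by_contra hnadj
    have he12 : e1 ≠ e2 := fun h => hnadj (h ▸ hae1)
    have he1C : e1 ∈ C' := hclssub y he1
    have he2C : e2 ∈ C' := hclssub y he2
    have he1e2 : G.Adj e1 e2 :=
      hclsclique y hy (Finset.mem_coe.mpr he1) (Finset.mem_coe.mpr he2) he12
    have hb'ex : ∃ b' ∈ D, ¬ G.Adj a b' := by
      by_contra hcc; push_neg at hcc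
      exact hanAW (Finset.mem_filter.mpr ⟨haA, hcc⟩)
    obtain ⟨b', hb'D, hnab'⟩ := hb'ex
    have hsa : (D.filter (G.Adj a ·)).card < p :=
      hpartial D hDclique a b' hb'D hnab' ((hCv b' (hDC hb'D) a haA).symm)
    have hsplitD := Finset.card_filter_add_card_filter_not (s := D)
      (p := fun b => G.Adj a b)
    obtain ⟨b1, hb1, b2, hb2, hb12⟩ := Finset.one_lt_card.mp
      (by omega : 1 < (D.filter (fun b => ¬ G.Adj a b)).card)
    obtain ⟨hb1D, hb1n⟩ := Finset.mem_filter.mp hb1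
    obtain ⟨hb2D, hb2n⟩ := Finset.mem_filter.mp hb2
    have hclse1 : cls e1 = cls y := hclseq y hy e1 he1
    have hclse2 : cls e2 = cls y := hclseq y hy e2 he2
    have hEadj : ∀ e ∈ cls y, ∀ b ∈ D, ¬ G.Adj e b ∧ e ≠ b := by
      intro e he b hb
      constructor
      · intro h
        have heC : e ∈ C' := hclssub y he
        have : e ∈ cls b := (hclsmem b e).mpr ⟨heC, Or.inr h⟩
        have h2 := hclseq b (hDC hb) e this
        exact hney (by rw [← hclseq y hy e he, h2, hclsD b hb])
      · intro h
        exact hney (by rw [← hclseq y hy e he, h, hclsD b hb])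
    obtain ⟨h1b1, h1b1'⟩ := hEadj e1 he1 b1 hb1D
    obtain ⟨h1b2, h1b2'⟩ := hEadj e1 he1 b2 hb2D
    obtain ⟨h2b1, h2b1'⟩ := hEadj e2 he2 b1 hb1D
    obtain ⟨h2b2, h2b2'⟩ := hEadj e2 he2 b2 hb2D
    exact noP3P2 hf1 hae1 he1e2 hnadj ((hCv e2 he2C a haA).symm)
      (hDclique (Finset.mem_coe.mpr hb1D) (Finset.mem_coe.mpr hb2D) hb12)
      hb1n hb2n h1b1 h1b2 h2b1 h2b2
      ((hCv b1 (hDC hb1D) a haA).symm) ((hCv b2 (hDC hb2D) a haA).symm)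
      h1b1' h1b2' h2b1' h2b2'
  -- injective choice of colours for R
  obtain ⟨fR, hfRinj, hfRmem⟩ :
      ∃ f : V → V, Set.InjOn f (R' : Set V) ∧ ∀ r ∈ R', f r ∈ A' ∧ ¬ G.Adj r (f r) := by
    have hcond : ∀ s : Finset ↥R',
        s.card ≤ (s.biUnion (fun r => A'.filter (fun a => ¬ G.Adj r.1 a))).card := by
      intro s
      rcases s.eq_empty_or_nonempty with rfl | ⟨r, hr⟩
      · simp
      · have h1 : A'.filter (fun a => ¬ G.Adj r.1 a) ⊆
            s.biUnion (fun r => A'.filter (fun a => ¬ G.Adj r.1 a)) :=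
          Finset.subset_biUnion_of_mem (fun r => A'.filter (fun a => ¬ G.Adj r.1 a)) hr
        have h2 := Finset.card_le_card h1
        have h3 := Finset.card_filter_add_card_filter_not (s := A')
          (p := fun a => G.Adj r.1 a)
        have h4 := hRA r.1 r.2
        have h5 : s.card ≤ R'.card := by
          have := Finset.card_le_univ s
          rwa [Fintype.card_coe] at this
        rw [hcardA] at h3
        omega
    obtain ⟨f0, hf0inj, hf0mem⟩ :=
      (Finset.all_card_le_biUnion_card_iff_exists_injective _).mp hcond
    refine ⟨fun v => if h : v ∈ R' then f0 ⟨v, h⟩ else v, ?_, ?_⟩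
    · intro x hx w hw hxw
      rw [Finset.mem_coe] at hx hw
      simp only [dif_pos hx, dif_pos hw] at hxw
      exact congrArg Subtype.val (hf0inj hxw)
    · intro r hr
      simp only [dif_pos hr]
      have := hf0mem ⟨r, hr⟩
      rw [Finset.mem_filter] at this
      exact ⟨this.1, this.2⟩
  set tset : V → Finset V := fun b =>
    (A'.filter (fun a => ¬ G.Adj b a)) \ ((R'.filter (fun r => G.Adj b r)).image fR) with htsetdef
  -- Hall's condition and theorem for each class
  have htsetcard : ∀ b ∈ C', ω ≤ (tset b).card + R'.card + p - 1 := by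
    intro b hb
    have h0 : tset b =
        (A'.filter (fun a => ¬ G.Adj b a)) \ ((R'.filter (fun r => G.Adj b r)).image fR) := by
      rw [htsetdef]
    have hs1 := Finset.le_card_sdiff ((R'.filter (fun r => G.Adj b r)).image fR)
      (A'.filter (fun a => ¬ G.Adj b a))
    have hs2 := Finset.card_image_le (s := R'.filter (fun r => G.Adj b r)) (f := fR)
    have hs3 := Finset.card_le_card (Finset.filter_subset (fun r => G.Adj b r) R')
    have hs4 := Finset.card_filter_add_card_filter_not (s := A')
      (p := fun a => G.Adj b a)
    have hs5 := hL1 b hb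
    rw [hcardA] at hs4
    rw [h0]
    omega
  have hallcls : ∀ y ∈ C', ∃ f : V → V, Set.InjOn f ((cls y : Finset V) : Set V) ∧
      ∀ b ∈ cls y, f b ∈ tset b := by
    intro y hyC
    have hkey : ∀ S ⊆ cls y, S.card ≤ (S.biUnion tset).card := by
      intro S hSE
      rcases S.eq_empty_or_nonempty with rfl | ⟨b0, hb0⟩
      · simp
      · have hb0E := hSE hb0
        have hb0C : b0 ∈ C' := hclssub y hb0E
        have htsub : tset b0 ⊆ S.biUnion tset := Finset.subset_biUnion_of_mem _ hb0
        have htcard := Finset.card_le_card htsub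
        by_cases hbig : p ≤ S.card
        · by_cases hED : cls y = D
          · -- maximal class D
            have hsub : A' \ (AW ∪ R'.image fR) ⊆ S.biUnion tset := by
              intro a ha
              obtain ⟨haA, hanot⟩ := Finset.mem_sdiff.mp ha
              rw [Finset.mem_union] at hanot
              push_neg at hanot
              obtain ⟨hanAW, hanIm⟩ := hanot
              rw [Finset.mem_biUnion]
              by_contra hno
              push_neg at hno
              have hda : ∀ b ∈ S, G.Adj b a := by
                intro b hb
                have hnt := hno b hb
                by_contra hnadj
                apply hnt
                rw [htsetdef, Finset.mem_sdiff]
                constructor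
                · exact Finset.mem_filter.mpr ⟨haA, hnadj⟩
                · intro hmem
                  exact hanIm (Finset.image_subset_image (Finset.filter_subset _ _) hmem)
              have hcompa : ∀ b ∈ D, G.Adj a b := by
                by_contra hcc
                push_neg at hcc
                obtain ⟨b', hb'D, hnab'⟩ := hcc
                have hsm := hpartial D hDclique a b' hb'D hnab'
                  ((hCv b' (hDC hb'D) a haA).symm)
                have hSsub : S ⊆ D.filter (G.Adj a ·) := by
                  intro b hb
                  refine Finset.mem_filter.mpr ⟨?_, (hda b hb).symm⟩
                  rw [← hED]
                  exact hSE hb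
                have := Finset.card_le_card hSsub
                omega
              exact hanAW (Finset.mem_filter.mpr ⟨haA, hcompa⟩)
            have h1 := Finset.card_le_card hsub
            have h2 := Finset.le_card_sdiff (AW ∪ R'.image fR) A'
            have h3 := Finset.card_union_le AW (R'.image fR)
            have h4 := Finset.card_image_le (s := R') (f := fR)
            have hSD : S.card ≤ D.card := Finset.card_le_card (hED ▸ hSE)
            rw [hcardA] at h2
            omega
          · -- class different from D
            set AE := A'.filter (fun a => ∀ b ∈ cls y, G.Adj a b) with hAEdef
            set RE := R'.filter (fun r => ∀ b ∈ cls y, G.Adj r b) with hREdef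
            have hsub : A' \ (AE ∪ RE.image fR) ⊆ S.biUnion tset := by
              intro a ha
              obtain ⟨haA, hanot⟩ := Finset.mem_sdiff.mp ha
              rw [Finset.mem_union] at hanot
              push_neg at hanot
              obtain ⟨hanAE, hanIm⟩ := hanot
              rw [Finset.mem_biUnion]
              by_contra hno
              push_neg at hno
              have hda : ∀ b ∈ S, G.Adj b a ∨ ∃ r ∈ R', G.Adj b r ∧ fR r = a := by
                intro b hb
                have hnt := hno b hb
                by_cases hnadj : G.Adj b a
                · exact Or.inl hnadj
                · right
                  have hmem : a ∈ (R'.filter (fun r => G.Adj b r)).image fR := by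
                    by_contra hni
                    apply hnt
                    rw [htsetdef, Finset.mem_sdiff]
                    exact ⟨Finset.mem_filter.mpr ⟨haA, hnadj⟩, hni⟩
                  obtain ⟨r, hrm, hre⟩ := Finset.mem_image.mp hmem
                  obtain ⟨hrR, hradj⟩ := Finset.mem_filter.mp hrm
                  exact ⟨r, hrR, hradj, hre⟩
              have hcomplA : (∀ b ∈ S, G.Adj a b) → False := by
                intro hcc
                have hAEmem : ∀ b ∈ cls y, G.Adj a b := by
                  by_contra hc2
                  push_neg at hc2
                  obtain ⟨e', he', hnae'⟩ := hc2
                  have hsm := hpartial (cls y) (hclsclique y hyC) a e' he' hnae'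
                    ((hCv e' (hclssub y he') a haA).symm)
                  have hSsub : S ⊆ (cls y).filter (G.Adj a ·) := fun b hb =>
                    Finset.mem_filter.mpr ⟨hSE hb, hcc b hb⟩
                  have := Finset.card_le_card hSsub
                  omega
                exact hanAE (Finset.mem_filter.mpr ⟨haA, hAEmem⟩)
              by_cases himg : ∃ r ∈ R', fR r = a
              · obtain ⟨r, hrR, hfr⟩ := himg
                have hdar : ∀ b ∈ S, G.Adj b a ∨ G.Adj b r := by
                  intro b hb
                  rcases hda b hb with h | ⟨r', hr'R, hadj', hre'⟩
                  · exact Or.inl h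
                  · have : r' = r := hfRinj (Finset.mem_coe.mpr hr'R)
                      (Finset.mem_coe.mpr hrR) (hre'.trans hfr.symm)
                    exact Or.inr (this ▸ hadj')
                have hnar : ¬ G.Adj r a := by
                  have := (hfRmem r hrR).2
                  rwa [hfr] at this
                by_cases haAW : a ∈ AW
                · have : G.Adj a r := hadjcom D hDclique hpd a r
                    (fun h => hRnA r hrR (h ▸ haA)) (hAWcomp a haAW)
                    (fun b hb => hRD r hrR b hb)
                  exact hnar this.symm
                · by_cases hnbr : ∃ e1 ∈ cls y, G.Adj a e1
                  · have hAE2 : ∀ e2 ∈ cls y, G.Adj a e2 := hL12 y hyC hED a haA haAW hnbr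
                    exact hanAE (Finset.mem_filter.mpr ⟨haA, hAE2⟩)
                  · push_neg at hnbr
                    have hrS : ∀ b ∈ S, G.Adj r b := by
                      intro b hb
                      rcases hdar b hb with h | h
                      · exact absurd h.symm (hnbr b (hSE hb))
                      · exact h.symm
                    have hrE : ∀ b ∈ cls y, G.Adj r b := by
                      by_contra hc2
                      push_neg at hc2
                      obtain ⟨e', he', hnre'⟩ := hc2
                      have hre'ne : r ≠ e' := fun h => hRC r hrR (h ▸ hclssub y he')
                      have hsm := hpartial (cls y) (hclsclique y hyC) r e' he' hnre' hre'ne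
                      have hSsub : S ⊆ (cls y).filter (G.Adj r ·) := fun b hb =>
                        Finset.mem_filter.mpr ⟨hSE hb, hrS b hb⟩
                      have := Finset.card_le_card hSsub
                      omega
                    exact hanIm
                      (Finset.mem_image.mpr ⟨r, Finset.mem_filter.mpr ⟨hrR, hrE⟩, hfr⟩)
              · apply hcomplA
                intro b hb
                rcases hda b hb with h | ⟨r', hr'R, _, hre'⟩
                · exact h.symm
                · exact absurd ⟨r', hr'R, hre'⟩ himg
            -- cardinality: S ∪ AE ∪ RE is a clique
            have hSclq : G.IsClique (S : Set V) :=
              (hclsclique y hyC).subset (by exact_mod_cast hSE)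
            have hclq : G.IsClique ((S ∪ AE ∪ RE : Finset V) : Set V) := by
              have hcompS : ∀ w, (w ∈ AE ∨ w ∈ RE) → ∀ b ∈ S, G.Adj w b := by
                rintro w (hw | hw) b hb
                · exact (Finset.mem_filter.mp hw).2 b (hSE hb)
                · exact (Finset.mem_filter.mp hw).2 b (hSE hb)
              have hcadj : ∀ x w, (x ∈ AE ∨ x ∈ RE) → (w ∈ AE ∨ w ∈ RE) → x ≠ w → G.Adj x w :=
                fun x w hx hw hxw => hadjcom S hSclq hbig x w hxw (hcompS x hx) (hcompS w hw)
              intro x hx w hw hxw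
              rw [Finset.mem_coe, Finset.mem_union, Finset.mem_union] at hx hw
              rcases hx with (hx | hx) | hx <;> rcases hw with (hw | hw) | hw
              · exact hSclq (Finset.mem_coe.mpr hx) (Finset.mem_coe.mpr hw) hxw
              · exact (hcompS w (Or.inl hw) x hx).symm
              · exact (hcompS w (Or.inr hw) x hx).symm
              · exact hcompS x (Or.inl hx) w hw
              · exact hcadj x w (Or.inl hx) (Or.inl hw) hxw
              · exact hcadj x w (Or.inl hx) (Or.inr hw) hxw
              · exact hcompS x (Or.inr hx) w hw
              · exact hcadj x w (Or.inr hx) (Or.inl hw) hxw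
              · exact hcadj x w (Or.inr hx) (Or.inr hw) hxw
            have hd1 : Disjoint S AE := by
              rw [Finset.disjoint_left]
              intro b hb hbAE
              exact hAC b (hclssub y (hSE hb)) ((Finset.filter_subset _ _) hbAE)
            have hd2 : Disjoint (S ∪ AE) RE := by
              rw [Finset.disjoint_left]
              intro b hb hbRE
              have hbR : b ∈ R' := (Finset.filter_subset _ _) hbRE
              rcases Finset.mem_union.mp hb with h | h
              · exact hRC b hbR (hclssub y (hSE h))
              · exact hRnA b hbR ((Finset.filter_subset _ _) h)
            have hcards := hKle _ hclq
            rw [Finset.card_union_of_disjoint hd2, Finset.card_union_of_disjoint hd1] at hcards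
            have h1 := Finset.card_le_card hsub
            have h2 := Finset.le_card_sdiff (AE ∪ RE.image fR) A'
            have h3 := Finset.card_union_le AE (RE.image fR)
            have h4 := Finset.card_image_le (s := RE) (f := fR)
            rw [hcardA] at h2
            omega
        · -- small case: a single tset already suffices
          have := htsetcard b0 hb0C
          omega
    have hcond : ∀ s : Finset ↥(cls y), s.card ≤ (s.biUnion (fun b => tset b.1)).card := by
      intro s
      have himg : (s.image Subtype.val).biUnion tset = s.biUnion (fun b => tset b.1) :=
        Finset.image_biUnion
      have hsub : s.image Subtype.val ⊆ cls y := by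
        intro b hb
        obtain ⟨u, hu, rfl⟩ := Finset.mem_image.mp hb
        exact u.2
      have := hkey _ hsub
      rw [Finset.card_image_of_injective _ Subtype.val_injective, himg] at this
      exact this
    obtain ⟨f0, hf0inj, hf0mem⟩ :=
      (Finset.all_card_le_biUnion_card_iff_exists_injective _).mp hcond
    refine ⟨fun v => if h : v ∈ cls y then f0 ⟨v, h⟩ else v, ?_, ?_⟩
    · intro x hx w hw hxw
      rw [Finset.mem_coe] at hx hw
      simp only [dif_pos hx, dif_pos hw] at hxw
      exact congrArg Subtype.val (hf0inj hxw)
    · intro b hb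
      simp only [dif_pos hb]
      exact hf0mem ⟨b, hb⟩
  -- assemble
  set PP : Finset V → Prop := fun E => ∃ f : V → V, Set.InjOn f (E : Set V) ∧
      ∀ b ∈ E, f b ∈ tset b with hPPdef
  set gcl : Finset V → (V → V) := fun E => if h : PP E then h.choose else id with hgcldef
  have hgcl : ∀ E, PP E → Set.InjOn (gcl E) (E : Set V) ∧ ∀ b ∈ E, gcl E b ∈ tset b := by
    intro E hE
    rw [hgcldef]
    simp only [dif_pos hE]
    exact hE.choose_spec
  set col : V → V := fun v => if v ∈ A' then v else if v ∈ C' then gcl (cls v) v else fR v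
    with hcoldef
  have hcolC : ∀ v ∈ C', col v = gcl (cls v) v := by
    intro v hv
    rw [hcoldef]
    simp only [if_neg (hAC v hv), if_pos hv]
  have hcolCmem : ∀ v ∈ C', col v ∈ tset v := by
    intro v hv
    rw [hcolC v hv]
    exact (hgcl (cls v) (by
      obtain ⟨f, hf1, hf2⟩ := hallcls v hv
      exact ⟨f, hf1, hf2⟩)).2 v (hself v hv)
  have hvalA : ∀ v ∈ A', col v = v := by
    intro v hv
    rw [hcoldef]
    simp only [if_pos hv]
  have hcolR : ∀ v, v ∉ A' → v ∉ C' → col v = fR v := by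
    intro v h1 h2
    rw [hcoldef]
    simp only [if_neg h1, if_neg h2]
  have hcolA : ∀ v, col v ∈ A' := by
    intro v
    by_cases h1 : v ∈ A'
    · rw [hvalA v h1]; exact h1
    · by_cases h2 : v ∈ C'
      · have := hcolCmem v h2
        rw [htsetdef, Finset.mem_sdiff] at this
        exact (Finset.mem_filter.mp this.1).1
      · rw [hcolR v h1 h2]
        exact (hfRmem v ((hmemR v).mpr ⟨h1, h2⟩)).1
  have htFact : ∀ v ∈ C', ¬ G.Adj v (col v) ∧ ∀ r ∈ R', G.Adj v r → col v ≠ fR r := by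
    intro v hv
    have := hcolCmem v hv
    rw [htsetdef, Finset.mem_sdiff] at this
    obtain ⟨hf, hni⟩ := this
    refine ⟨(Finset.mem_filter.mp hf).2, ?_⟩
    intro r hr hadj heq
    exact hni (Finset.mem_image.mpr ⟨r, Finset.mem_filter.mpr ⟨hr, hadj⟩, heq.symm⟩)
  have hproper : ∀ v w, G.Adj v w → col v ≠ col w := by
    have keyA : ∀ v w, G.Adj v w → w ∈ A' → col v = col w → v ∉ A' → False := by
      intro v w hadj hwA heq hvA
      by_cases hvC : v ∈ C'
      · have := (htFact v hvC).1
        rw [heq, hvalA w hwA] at this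
        exact this hadj
      · have hvR : v ∈ R' := (hmemR v).mpr ⟨hvA, hvC⟩
        have := (hfRmem v hvR).2
        rw [← hcolR v hvA hvC, heq, hvalA w hwA] at this
        exact this hadj
    intro v w hadj heq
    by_cases hvA : v ∈ A' <;> by_cases hwA : w ∈ A'
    · rw [hvalA v hvA, hvalA w hwA] at heq
      exact hadj.ne heq
    · exact keyA w v hadj.symm hvA heq.symm hwA
    · exact keyA v w hadj hwA heq hvA
    · by_cases hvC : v ∈ C' <;> by_cases hwC : w ∈ C'
      · have hwcls : w ∈ cls v := (hclsmem v w).mpr ⟨hwC, Or.inr hadj.symm⟩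
        have hcl : cls w = cls v := hclseq v hvC w hwcls
        have hPP : PP (cls v) := by
          obtain ⟨f, hf1, hf2⟩ := hallcls v hvC
          exact ⟨f, hf1, hf2⟩
        have hinjOn := (hgcl (cls v) hPP).1
        rw [hcolC v hvC, hcolC w hwC, hcl] at heq
        exact hadj.ne
          (hinjOn (Finset.mem_coe.mpr (hself v hvC)) (Finset.mem_coe.mpr hwcls) heq)
      · have hwR : w ∈ R' := (hmemR w).mpr ⟨hwA, hwC⟩
        exact (htFact v hvC).2 w hwR hadj (heq.trans (hcolR w hwA hwC))
      · have hvR : v ∈ R' := (hmemR v).mpr ⟨hvA, hvC⟩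
        exact (htFact w hwC).2 v hvR hadj.symm (heq.symm.trans (hcolR v hvA hvC))
      · have hvR : v ∈ R' := (hmemR v).mpr ⟨hvA, hvC⟩
        have hwR : w ∈ R' := (hmemR w).mpr ⟨hwA, hwC⟩
        rw [hcolR v hvA hvC, hcolR w hwA hwC] at heq
        exact hadj.ne (hfRinj (Finset.mem_coe.mpr hvR) (Finset.mem_coe.mpr hwR) heq)
  have hcolorable : G.Colorable ω := by
    have cc : G.Coloring ↥A' :=
      Coloring.mk (fun v => (⟨col v, hcolA v⟩ : ↥A'))
        (fun hadj => by
          simp only [ne_eq, Subtype.mk.injEq]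
          exact hproper _ _ hadj)
    have := cc.colorable
    rwa [Fintype.card_coe, hcardA] at this
  refine le_antisymm (hcolorable.chromaticNumber_le) ?_
  have := hA'.card_le_chromaticNumber
  rwa [hcardA] at this
end

section
/- Let G be a {P3 ∪ P2, (K1 ∪ K2) + Kp}-free graph with ω(G) ≥ p+2, p ≥ 1, with maximum clique A = {v1,...,vω} and Wagon partition sets C_{i,j}. If for some pair (i,j) with j ≤ p+1 the clique number of the subgraph induced on C_{i,j} is at least p−j+4, then for every k ≠ i with 1 ≤ k ≤ j−1 the set C_{k,j} is an independent set (its induced subgraph has clique number at most 1). -/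
open SimpleGraph

lemma lemA {V : Type*} {G : SimpleGraph V} (hf1 : _root_.Free P3P2 G) (a b c d e : V)
    (hab : G.Adj a b) (hbc : G.Adj b c) (hac : ¬ G.Adj a c) (hde : G.Adj d e)
    (had : ¬ G.Adj a d) (hae : ¬ G.Adj a e) (hbd : ¬ G.Adj b d) (hbe : ¬ G.Adj b e)
    (hcd : ¬ G.Adj c d) (hce : ¬ G.Adj c e)
    (nac : a ≠ c) (nad : a ≠ d) (nae : a ≠ e) (nbd : b ≠ d) (nbe : b ≠ e)
    (ncd : c ≠ d) (nce : c ≠ e) : False := by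
  apply hf1
  refine ⟨⟨⟨fun z => match z with
    | Sum.inl 0 => a | Sum.inl 1 => b | Sum.inl 2 => c
    | Sum.inr 0 => d | Sum.inr 1 => e, ?_⟩, ?_⟩⟩
  · intro z w h
    have nab := hab.ne
    have nbc := hbc.ne
    have nde := hde.ne
    rcases z with z | z <;> rcases w with w | w <;> fin_cases z <;> fin_cases w <;>
      simp_all <;> first | rfl | (exfalso; simp_all)
  · have hca : ¬ G.Adj c a := fun h => hac h.symm
    have hda : ¬ G.Adj d a := fun h => had h.symm
    have hea : ¬ G.Adj e a := fun h => hae h.symm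
    have hdb : ¬ G.Adj d b := fun h => hbd h.symm
    have heb : ¬ G.Adj e b := fun h => hbe h.symm
    have hdc : ¬ G.Adj d c := fun h => hcd h.symm
    have hec : ¬ G.Adj e c := fun h => hce h.symm
    intro z w
    dsimp only [DFunLike.coe]
    rcases z with z | z <;> rcases w with w | w <;> fin_cases z <;> fin_cases w <;>
      simp [P3P2, pathGraph_adj, hab, hbc, hde, hab.symm, hbc.symm, hde.symm,
        hac, had, hae, hbd, hbe, hcd, hce,
        hca, hda, hea, hdb, heb, hdc, hec, G.irrefl]

lemma K1K2Kp_adj_ll {p : ℕ} (u u' : Fin 1 ⊕ Fin 2) :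
    (K1K2Kp p).Adj (Sum.inl u) (Sum.inl u') ↔ K1K2.Adj u u' := by
  simp only [K1K2Kp, joinG, SimpleGraph.fromRel_adj]
  constructor
  · rintro ⟨h, h' | h'⟩
    · exact h'
    · exact h'.symm
  · intro h
    exact ⟨by simp [h.ne], Or.inl h⟩

lemma K1K2Kp_adj_lr {p : ℕ} (u : Fin 1 ⊕ Fin 2) (t : Fin p) :
    (K1K2Kp p).Adj (Sum.inl u) (Sum.inr t) := by
  simp [K1K2Kp, joinG, SimpleGraph.fromRel_adj]

lemma K1K2Kp_adj_rl {p : ℕ} (u : Fin 1 ⊕ Fin 2) (t : Fin p) :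
    (K1K2Kp p).Adj (Sum.inr t) (Sum.inl u) := (K1K2Kp_adj_lr u t).symm

lemma K1K2Kp_adj_rr {p : ℕ} (t t' : Fin p) :
    (K1K2Kp p).Adj (Sum.inr t) (Sum.inr t') ↔ t ≠ t' := by
  simp only [K1K2Kp, joinG, SimpleGraph.fromRel_adj]
  constructor
  · rintro ⟨h, -⟩ e; exact h (by rw [e])
  · intro h
    exact ⟨by simp [h], Or.inl (by simpa using h)⟩

lemma lemB {V : Type*} {G : SimpleGraph V} {p : ℕ} (hf2 : _root_.Free (K1K2Kp p) G)
    (a b c : V) (T : Finset V) (hcard : T.card = p)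
    (hab : ¬ G.Adj a b) (hac : ¬ G.Adj a c) (hbc : G.Adj b c)
    (nab : a ≠ b) (nac : a ≠ c)
    (haT : ∀ t ∈ T, G.Adj a t) (hbT : ∀ t ∈ T, G.Adj b t) (hcT : ∀ t ∈ T, G.Adj c t)
    (hTc : ∀ t ∈ T, ∀ t' ∈ T, t ≠ t' → G.Adj t t') : False := by
  apply hf2
  let w : Fin p → V := fun t => ((T.equivFinOfCardEq hcard).symm t : V)
  have hwT : ∀ t, w t ∈ T := fun t => ((T.equivFinOfCardEq hcard).symm t).2
  have hwinj : Function.Injective w := fun t t' h => by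
    have := (T.equivFinOfCardEq hcard).symm.injective (Subtype.ext h); exact this
  have hwa : ∀ t, G.Adj a (w t) := fun t => haT _ (hwT t)
  have hwb : ∀ t, G.Adj b (w t) := fun t => hbT _ (hwT t)
  have hwc : ∀ t, G.Adj c (w t) := fun t => hcT _ (hwT t)
  have hba : ¬ G.Adj b a := fun h => hab h.symm
  have hca : ¬ G.Adj c a := fun h => hac h.symm
  have key : ∀ t t' : Fin p, G.Adj (w t) (w t') ↔ t ≠ t' := by
    intro t t'
    constructor
    · intro h htt'; rw [htt'] at h; exact G.irrefl h
    · intro h; exact hTc _ (hwT t) _ (hwT t') (fun e => h (hwinj e))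
  let f : (Fin 1 ⊕ Fin 2) ⊕ Fin p → V := fun z => match z with
    | Sum.inl (Sum.inl _) => a | Sum.inl (Sum.inr 0) => b | Sum.inl (Sum.inr 1) => c
    | Sum.inr t => w t
  have hf : ∀ z, f z = match z with
    | Sum.inl (Sum.inl _) => a | Sum.inl (Sum.inr 0) => b | Sum.inl (Sum.inr 1) => c
    | Sum.inr t => w t := fun z => rfl
  refine ⟨⟨⟨f, ?_⟩, ?_⟩⟩
  · intro z z' h
    rcases z with (z | z) | z <;> rcases z' with (z' | z') | z'
    · exact congrArg _ (congrArg _ (Subsingleton.elim _ _))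
    · exfalso; fin_cases z' <;> simp only [hf] at h
      · exact nab h
      · exact nac h
    · exact absurd h (hwa z').ne
    · exfalso; fin_cases z <;> simp only [hf] at h
      · exact nab h.symm
      · exact nac h.symm
    · fin_cases z <;> fin_cases z' <;> simp only [hf] at h ⊢ <;>
        first | rfl | exact absurd h hbc.ne | exact absurd h.symm hbc.ne
    · exfalso; fin_cases z <;> simp only [hf] at h
      · exact (hwb z').ne h
      · exact (hwc z').ne h
    · exact absurd h.symm (hwa z).ne
    · exfalso; fin_cases z' <;> simp only [hf] at h
      · exact (hwb z).ne h.symm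
      · exact (hwc z).ne h.symm
    · exact congrArg _ (hwinj h)
  · intro z z'
    dsimp only [DFunLike.coe]
    rcases z with (z | z) | z <;> rcases z' with (z' | z') | z'
    · simp [f, K1K2Kp_adj_ll, K1K2, Subsingleton.elim z z']
    · fin_cases z' <;> simp [f, K1K2Kp_adj_ll, K1K2, hab, hac]
    · simp [f, K1K2Kp_adj_lr, hwa]
    · fin_cases z <;>
        simp [f, K1K2Kp_adj_ll, K1K2, hba, hca]
    · fin_cases z <;> fin_cases z' <;>
        simp [f, K1K2Kp_adj_ll, K1K2, hbc, hbc.symm, G.irrefl, Fin.ext_iff]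
    · fin_cases z <;> simp [f, K1K2Kp_adj_lr, hwb, hwc]
    · simp [f, K1K2Kp_adj_rl, (hwa _).symm]
    · fin_cases z' <;> simp [f, K1K2Kp_adj_rl, (hwb _).symm, (hwc _).symm]
    · simp [f, K1K2Kp_adj_rr, key]

theorem stmt_18 {V : Type*} [Fintype V] (G : SimpleGraph V) (p : ℕ) (hp : 1 ≤ p)
    (hf1 : _root_.Free P3P2 G) (hf2 : _root_.Free (K1K2Kp p) G)
    (hω : p + 2 ≤ G.cliqueNum)
    (v : Fin G.cliqueNum → V) (hinj : Function.Injective v)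
    (hclique : G.IsClique (Set.range v))
    -- the Wagon partition set C_{i,j} (0-indexed here):
    (C : Fin G.cliqueNum → Fin G.cliqueNum → Set V)
    (hC : ∀ i j, C i j = {x | x ∉ Set.range v ∧ ¬ G.Adj x (v i) ∧ ¬ G.Adj x (v j) ∧
        ∀ k, k < j → k ≠ i → G.Adj x (v k)})
    (i j : Fin G.cliqueNum) (hij : i < j) (hj : (j : ℕ) + 1 ≤ p + 1)
    (hbig : ∃ S : Set V, S ⊆ C i j ∧ G.IsClique S ∧ p + 3 - (j : ℕ) ≤ S.ncard) :
    ∀ k : Fin G.cliqueNum, k ≠ i → k < j →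
      ∀ x ∈ C k j, ∀ y ∈ C k j, ¬ G.Adj x y := by
  classical
  obtain ⟨S, hSsub, hSclique, hScard⟩ := hbig
  intro k hki hkj x hx y hy hxy
  simp only [hC, Set.mem_setOf_eq] at hx hy
  obtain ⟨hxA, hxk, hxj, hxadj⟩ := hx
  obtain ⟨hyA, hyk, hyj, hyadj⟩ := hy
  have hik : i ≠ k := fun h => hki h.symm
  have hinej : i ≠ j := hij.ne
  have hknej : k ≠ j := hkj.ne
  have hxi : G.Adj x (v i) := hxadj i hij hik
  have hyi : G.Adj y (v i) := hyadj i hij hik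
  have sP : ∀ s ∈ S, s ∉ Set.range v ∧ ¬ G.Adj s (v i) ∧ ¬ G.Adj s (v j) ∧
      ∀ m, m < j → m ≠ i → G.Adj s (v m) := by
    intro s hs
    have := hSsub hs
    rwa [hC, Set.mem_setOf_eq] at this
  have hvv : ∀ m m' : Fin G.cliqueNum, m ≠ m' → G.Adj (v m) (v m') := fun m m' h =>
    hclique ⟨m, rfl⟩ ⟨m', rfl⟩ (fun e => h (hinj e))
  -- step1: no two distinct elements of S both nonadjacent to y (resp x)
  have step1 : ∀ z : V, z ∉ Set.range v → ¬ G.Adj z (v j) → G.Adj z (v i) →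
      ∀ s ∈ S, ∀ s' ∈ S, s ≠ s' → ¬ G.Adj s z → ¬ G.Adj s' z → False := by
    intro z hzA hzj hzi s hs s' hs' hne hsz hs'z
    obtain ⟨hsA, hsi, hsj, hsadj⟩ := sP s hs
    obtain ⟨hs'A, hs'i, hs'j, hs'adj⟩ := sP s' hs'
    refine lemA hf1 z (v i) (v j) s s' hzi (hvv i j hinej) hzj (hSclique hs hs' hne)
      (fun h => hsz h.symm) (fun h => hs'z h.symm)
      (fun h => hsi h.symm) (fun h => hs'i h.symm)
      (fun h => hsj h.symm) (fun h => hs'j h.symm)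
      (fun h => hzA ⟨j, h.symm⟩)
      (fun h => hsi (h ▸ hzi)) (fun h => hs'i (h ▸ hzi))
      (fun h => hsA ⟨i, h⟩) (fun h => hs'A ⟨i, h⟩)
      (fun h => hsA ⟨j, h⟩) (fun h => hs'A ⟨j, h⟩)
  -- step2: no element of S nonadjacent to both x and y
  have step2 : ∀ s ∈ S, ¬ G.Adj s x → ¬ G.Adj s y → False := by
    intro s hs hsx hsy
    obtain ⟨hsA, hsi, hsj, hsadj⟩ := sP s hs
    refine lemA hf1 s (v k) (v j) x y (hsadj k hkj hki) (hvv k j hknej) hsj hxy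
      hsx hsy (fun h => hxk h.symm) (fun h => hyk h.symm)
      (fun h => hxj h.symm) (fun h => hyj h.symm)
      (fun h => hsA ⟨j, h.symm⟩)
      (fun h => hsi (by rw [h]; exact hxi)) (fun h => hsi (by rw [h]; exact hyi))
      (fun h => hxA ⟨k, h⟩) (fun h => hyA ⟨k, h⟩)
      (fun h => hxA ⟨j, h⟩) (fun h => hyA ⟨j, h⟩)
  -- finset versions
  set SF : Finset V := S.toFinite.toFinset with hSFdef
  have hmemSF : ∀ s, s ∈ SF ↔ s ∈ S := fun s => S.toFinite.mem_toFinset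
  have hSFcard : p + 3 - (j : ℕ) ≤ SF.card := by
    rwa [Set.ncard_eq_toFinset_card S S.toFinite] at hScard
  set Nx : Finset V := SF.filter (fun s => ¬ G.Adj s x) with hNxdef
  set Ny : Finset V := SF.filter (fun s => ¬ G.Adj s y) with hNydef
  have hNx1 : Nx.card ≤ 1 := by
    rw [Finset.card_le_one]
    intro s hs s' hs'
    rw [hNxdef, Finset.mem_filter, hmemSF] at hs hs'
    by_contra hne
    exact step1 x hxA hxj hxi s hs.1 s' hs'.1 hne hs.2 hs'.2
  have hNy1 : Ny.card ≤ 1 := by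
    rw [Finset.card_le_one]
    intro s hs s' hs'
    rw [hNydef, Finset.mem_filter, hmemSF] at hs hs'
    by_contra hne
    exact step1 y hyA hyj hyi s hs.1 s' hs'.1 hne hs.2 hs'.2
  set B : Finset V := SF \ (Nx ∪ Ny) with hBdef
  have hBcardEq : B.card = SF.card - (Nx ∪ Ny).card := by
    rw [hBdef]
    exact Finset.card_sdiff_of_subset (Finset.union_subset (Finset.filter_subset _ _)
      (Finset.filter_subset _ _))
  have hBcard : SF.card - 2 ≤ B.card := by
    have h1 : (Nx ∪ Ny).card ≤ 2 := le_trans (Finset.card_union_le _ _) (by omega)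
    omega
  have hBadj : ∀ t ∈ B, t ∈ S ∧ G.Adj t x ∧ G.Adj t y := by
    intro t ht
    rw [hBdef, Finset.mem_sdiff, Finset.mem_union, hNxdef, hNydef,
      Finset.mem_filter, Finset.mem_filter] at ht
    have htS := (hmemSF t).1 ht.1
    refine ⟨htS, ?_, ?_⟩
    · by_contra h; exact ht.2 (Or.inl ⟨ht.1, h⟩)
    · by_contra h; exact ht.2 (Or.inr ⟨ht.1, h⟩)
  -- the clique-A part
  have h2j : 2 ≤ (j : ℕ) := by
    have h1 : (i : ℕ) < j := hij
    have h2 : (k : ℕ) < j := hkj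
    have h3 : (i : ℕ) ≠ (k : ℕ) := fun h => hik (Fin.ext h)
    omega
  have hjp : (j : ℕ) ≤ p := by omega
  set M : Finset (Fin G.cliqueNum) := Finset.Iio j \ {i, k} with hMdef
  have hMcard : M.card = (j : ℕ) - 2 := by
    rw [hMdef, Finset.card_sdiff_of_subset]
    · rw [Fin.card_Iio, Finset.card_insert_of_notMem (by simpa using hik),
        Finset.card_singleton]
    · intro m hm
      simp only [Finset.mem_insert, Finset.mem_singleton] at hm
      rcases hm with rfl | rfl <;> simp [Finset.mem_Iio, hij, hkj]
  have hMprop : ∀ m ∈ M, m < j ∧ m ≠ i ∧ m ≠ k := by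
    intro m hm
    rw [hMdef, Finset.mem_sdiff, Finset.mem_Iio] at hm
    simp only [Finset.mem_insert, Finset.mem_singleton] at hm
    exact ⟨hm.1, fun h => hm.2 (Or.inl h), fun h => hm.2 (Or.inr h)⟩
  set MV : Finset V := M.image v with hMVdef
  have hMVcard : MV.card = (j : ℕ) - 2 := by
    rw [hMVdef, Finset.card_image_of_injective _ hinj, hMcard]
  have hMVmem : ∀ t ∈ MV, ∃ m ∈ M, v m = t := by
    intro t ht; rw [hMVdef, Finset.mem_image] at ht; exact ht
  -- case split
  by_cases hcase : Nx = ∅ ∨ Ny = ∅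
  · -- |Nx ∪ Ny| ≤ 1, so B has ≥ p+2-j elements all adjacent to both x,y
    have hu1 : (Nx ∪ Ny).card ≤ 1 := by
      rcases hcase with h | h <;> rw [h] <;> simp [hNx1, hNy1]
    have hB1 : p + 2 - (j : ℕ) ≤ B.card := by omega
    obtain ⟨B', hB'sub, hB'card⟩ := Finset.exists_subset_card_eq hB1
    have hB'p : ∀ t ∈ B', t ∈ S ∧ G.Adj t x ∧ G.Adj t y := fun t ht => hBadj t (hB'sub ht)
    set T : Finset V := B' ∪ MV with hTdef
    have hdisj : Disjoint B' MV := by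
      rw [Finset.disjoint_left]
      intro t ht htM
      obtain ⟨m, hm, rfl⟩ := hMVmem t htM
      exact (sP _ (hB'p _ ht).1).1 ⟨m, rfl⟩
    have hTcard : T.card = p := by
      rw [hTdef, Finset.card_union_of_disjoint hdisj, hB'card, hMVcard]; omega
    refine lemB hf2 (v k) x y T hTcard (fun h => hxk h.symm) (fun h => hyk h.symm) hxy
      (fun h => hxA ⟨k, h⟩) (fun h => hyA ⟨k, h⟩) ?_ ?_ ?_ ?_
    · intro t ht
      rw [hTdef, Finset.mem_union] at ht
      rcases ht with ht | ht
      · exact ((sP _ (hB'p _ ht).1).2.2.2 k hkj hki).symm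
      · obtain ⟨m, hm, rfl⟩ := hMVmem t ht
        exact hvv k m (fun h => (hMprop m hm).2.2 h.symm)
    · intro t ht
      rw [hTdef, Finset.mem_union] at ht
      rcases ht with ht | ht
      · exact (hB'p _ ht).2.1.symm
      · obtain ⟨m, hm, rfl⟩ := hMVmem t ht
        obtain ⟨h1, h2, h3⟩ := hMprop m hm
        exact hxadj m h1 h3
    · intro t ht
      rw [hTdef, Finset.mem_union] at ht
      rcases ht with ht | ht
      · exact (hB'p _ ht).2.2.symm
      · obtain ⟨m, hm, rfl⟩ := hMVmem t ht
        obtain ⟨h1, h2, h3⟩ := hMprop m hm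
        exact hyadj m h1 h3
    · intro t ht t' ht' hne
      rw [hTdef, Finset.mem_union] at ht ht'
      rcases ht with ht | ht <;> rcases ht' with ht' | ht'
      · exact hSclique (hB'p _ ht).1 (hB'p _ ht').1 hne
      · obtain ⟨m, hm, rfl⟩ := hMVmem t' ht'
        obtain ⟨h1, h2, h3⟩ := hMprop m hm
        exact (sP _ (hB'p _ ht).1).2.2.2 m h1 h2
      · obtain ⟨m, hm, rfl⟩ := hMVmem t ht
        obtain ⟨h1, h2, h3⟩ := hMprop m hm
        exact ((sP _ (hB'p _ ht').1).2.2.2 m h1 h2).symm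
      · obtain ⟨m, hm, rfl⟩ := hMVmem t ht
        obtain ⟨m', hm', rfl⟩ := hMVmem t' ht'
        exact hvv m m' (fun h => hne (by rw [h]))
  · -- Nx and Ny both nonempty
    push_neg at hcase
    obtain ⟨s, hs⟩ := hcase.1
    obtain ⟨s', hs'⟩ := hcase.2
    rw [hNxdef, Finset.mem_filter] at hs
    rw [hNydef, Finset.mem_filter] at hs'
    have hsS : s ∈ S := (hmemSF s).1 hs.1
    have hs'S : s' ∈ S := (hmemSF s').1 hs'.1
    have hss' : s ≠ s' := by
      rintro rfl
      exact step2 s hsS hs.2 hs'.2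
    have hsy : G.Adj s y := by
      by_contra h
      exact step2 s hsS hs.2 h
    have hs'x : G.Adj s' x := by
      by_contra h
      exact step2 s' hs'S h hs'.2
    have hB2 : p + 1 - (j : ℕ) ≤ B.card := by omega
    obtain ⟨B'', hB''sub, hB''card⟩ := Finset.exists_subset_card_eq hB2
    have hB''p : ∀ t ∈ B'', t ∈ S ∧ G.Adj t x ∧ G.Adj t y := fun t ht => hBadj t (hB''sub ht)
    have hsnB : s ∉ B'' ∪ MV := by
      rw [Finset.mem_union]
      rintro (h | h)
      · have := hB''sub h
        rw [hBdef, Finset.mem_sdiff] at this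
        exact this.2 (Finset.mem_union_left _ (by rw [hNxdef, Finset.mem_filter]; exact hs))
      · obtain ⟨m, hm, hmv⟩ := hMVmem s h
        exact (sP _ hsS).1 ⟨m, hmv⟩
    have hdisj : Disjoint B'' MV := by
      rw [Finset.disjoint_left]
      intro t ht htM
      obtain ⟨m, hm, rfl⟩ := hMVmem t htM
      exact (sP _ (hB''p _ ht).1).1 ⟨m, rfl⟩
    set T : Finset V := insert s (B'' ∪ MV) with hTdef
    have hTmem : ∀ t ∈ T, t = s ∨ t ∈ B'' ∨ t ∈ MV := by
      intro t ht
      rw [hTdef, Finset.mem_insert, Finset.mem_union] at ht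
      tauto
    have hTcard : T.card = p := by
      rw [hTdef, Finset.card_insert_of_notMem hsnB,
        Finset.card_union_of_disjoint hdisj, hB''card, hMVcard]
      omega
    have hs'vk : G.Adj s' (v k) := (sP s' hs'S).2.2.2 k hkj hki
    -- a = y, b = s', c = v k
    refine lemB hf2 y s' (v k) T hTcard (fun h => hs'.2 h.symm) (fun h => hyk h)
      hs'vk (fun h => (sP s' hs'S).2.1 (h ▸ hyi)) (fun h => hyA ⟨k, h.symm⟩) ?_ ?_ ?_ ?_
    · -- y adjacent to all of T
      intro t ht
      rcases hTmem t ht with rfl | ht | ht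
      · exact hsy.symm
      · exact (hB''p _ ht).2.2.symm
      · obtain ⟨m, hm, rfl⟩ := hMVmem t ht
        obtain ⟨h1, h2, h3⟩ := hMprop m hm
        exact hyadj m h1 h3
    · -- s' adjacent to all of T
      intro t ht
      rcases hTmem t ht with rfl | ht | ht
      · exact hSclique hs'S hsS (fun h => hss' h.symm)
      · refine hSclique hs'S (hB''p _ ht).1 ?_
        rintro rfl
        have := hB''sub ht
        rw [hBdef, Finset.mem_sdiff] at this
        exact this.2 (Finset.mem_union_right _ (by rw [hNydef, Finset.mem_filter]; exact hs'))
      · obtain ⟨m, hm, rfl⟩ := hMVmem t ht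
        obtain ⟨h1, h2, h3⟩ := hMprop m hm
        exact (sP s' hs'S).2.2.2 m h1 h2
    · -- v k adjacent to all of T
      intro t ht
      rcases hTmem t ht with rfl | ht | ht
      · exact ((sP _ hsS).2.2.2 k hkj hki).symm
      · exact ((sP _ (hB''p _ ht).1).2.2.2 k hkj hki).symm
      · obtain ⟨m, hm, rfl⟩ := hMVmem t ht
        exact hvv k m (fun h => (hMprop m hm).2.2 h.symm)
    · -- T is a clique
      intro t ht t' ht' hne
      rcases hTmem t ht with rfl | ht2 | ht2 <;> rcases hTmem t' ht' with rfl | ht2' | ht2'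
      · exact absurd rfl hne
      · exact hSclique hsS (hB''p _ ht2').1 hne
      · obtain ⟨m, hm, rfl⟩ := hMVmem t' ht2'
        obtain ⟨h1, h2, h3⟩ := hMprop m hm
        exact (sP _ hsS).2.2.2 m h1 h2
      · exact hSclique (hB''p _ ht2).1 hsS hne
      · exact hSclique (hB''p _ ht2).1 (hB''p _ ht2').1 hne
      · obtain ⟨m, hm, rfl⟩ := hMVmem t' ht2'
        obtain ⟨h1, h2, h3⟩ := hMprop m hm
        exact (sP _ (hB''p _ ht2).1).2.2.2 m h1 h2
      · obtain ⟨m, hm, rfl⟩ := hMVmem t ht2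
        obtain ⟨h1, h2, h3⟩ := hMprop m hm
        exact ((sP _ hsS).2.2.2 m h1 h2).symm
      · obtain ⟨m, hm, rfl⟩ := hMVmem t ht2
        obtain ⟨h1, h2, h3⟩ := hMprop m hm
        exact ((sP _ (hB''p _ ht2').1).2.2.2 m h1 h2).symm
      · obtain ⟨m, hm, rfl⟩ := hMVmem t ht2
        obtain ⟨m', hm', rfl⟩ := hMVmem t' ht2'
        exact hvv m m' (fun h => hne (by rw [h]))
end

section
/- Let G be a {P3 ∪ P2, diamond}-free graph with ω(G) = 4 and maximum clique A = {v1,v2,v3,v4}, such that every vertex outside A has at most one neighbor in A. If a and b are two adjacent vertices each nonadjacent to v1 and v3 (i.e., a, b ∈ C_{1,3}), then every vertex nonadjacent to both v2 and v3 (i.e., in C_{2,3}) yields a contradiction; hence C_{2,3} = ∅. -/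
open SimpleGraph

lemma p3p2_emb {V : Type*} (G : SimpleGraph V) (p0 p1 p2 q0 q1 : V)
    (h01 : G.Adj p0 p1) (h12 : G.Adj p1 p2) (h02 : ¬ G.Adj p0 p2) (hq : G.Adj q0 q1)
    (n00 : ¬ G.Adj p0 q0) (n01 : ¬ G.Adj p0 q1) (n10 : ¬ G.Adj p1 q0)
    (n11 : ¬ G.Adj p1 q1) (n20 : ¬ G.Adj p2 q0) (n21 : ¬ G.Adj p2 q1)
    (e02 : p0 ≠ p2) (e00 : p0 ≠ q0) (e01 : p0 ≠ q1) (e10 : p1 ≠ q0)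
    (e11 : p1 ≠ q1) (e20 : p2 ≠ q0) (e21 : p2 ≠ q1) :
    Nonempty (P3P2 ↪g G) := by
  refine ⟨⟨⟨Sum.elim (![p0, p1, p2]) (![q0, q1]), ?_⟩, ?_⟩⟩
  · have e01' := h01.ne
    have e12' := h12.ne
    have eq' := hq.ne
    rintro (i | i) (j | j) h <;> fin_cases i <;> fin_cases j <;> simp_all
  · show ∀ {a b}, G.Adj (Sum.elim ![p0, p1, p2] ![q0, q1] a) (Sum.elim ![p0, p1, p2] ![q0, q1] b) ↔ P3P2.Adj a b
    rintro (i | i) (j | j) <;> fin_cases i <;> fin_cases j <;>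
      simp_all [P3P2, sum_adj, pathGraph_adj, G.adj_comm]

lemma diamond_emb {V : Type*} (G : SimpleGraph V) (d0 d1 e0 e1 : V)
    (hd : ¬ G.Adj d0 d1) (hdne : d0 ≠ d1) (he : G.Adj e0 e1)
    (c00 : G.Adj d0 e0) (c01 : G.Adj d0 e1) (c10 : G.Adj d1 e0) (c11 : G.Adj d1 e1) :
    Nonempty (diamond ↪g G) := by
  refine ⟨⟨⟨Sum.elim (![d0, d1]) (![e0, e1]), ?_⟩, ?_⟩⟩
  · have := he.ne; have := c00.ne; have := c01.ne; have := c10.ne; have := c11.ne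
    rintro (i | i) (j | j) h <;> fin_cases i <;> fin_cases j <;> simp_all
  · show ∀ {a b}, G.Adj (Sum.elim ![d0, d1] ![e0, e1] a) (Sum.elim ![d0, d1] ![e0, e1] b) ↔ diamond.Adj a b
    rintro (i | i) (j | j) <;> fin_cases i <;> fin_cases j <;>
      simp_all [diamond, twoK1Kp, joinG, fromRel_adj, G.adj_comm]

theorem stmt_19 {V : Type*} [Fintype V] (G : SimpleGraph V)
    (hf1 : _root_.Free P3P2 G) (hf2 : _root_.Free diamond G) (hω : G.cliqueNum = 4)
    (v1 v2 v3 v4 : V)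
    (hA : G.IsClique ({v1, v2, v3, v4} : Set V))
    (hcard : ({v1, v2, v3, v4} : Set V).ncard = 4)
    (hone : ∀ x, x ∉ ({v1, v2, v3, v4} : Set V) →
        ({y ∈ ({v1, v2, v3, v4} : Set V) | G.Adj x y}).ncard ≤ 1)
    (a b : V) (hab : G.Adj a b)
    (haA : a ∉ ({v1, v2, v3, v4} : Set V)) (hbA : b ∉ ({v1, v2, v3, v4} : Set V))
    (ha1 : ¬ G.Adj a v1) (ha3 : ¬ G.Adj a v3) (ha2 : G.Adj a v2)
    (hb1 : ¬ G.Adj b v1) (hb3 : ¬ G.Adj b v3) (hb2 : G.Adj b v2)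
    (x : V) (hxA : x ∉ ({v1, v2, v3, v4} : Set V))
    (hx2 : ¬ G.Adj x v2) (hx3 : ¬ G.Adj x v3) (hx1 : G.Adj x v1) : False := by
  -- basic set facts
  set A : Set V := {v1, v2, v3, v4} with hAdef
  have hle3 : ∀ u w z : V, ({u, w, z} : Set V).ncard ≤ 3 := by
    intro u w z
    calc ({u, w, z} : Set V).ncard ≤ ({w, z} : Set V).ncard + 1 :=
          Set.ncard_insert_le _ _
      _ ≤ (({z} : Set V).ncard + 1) + 1 :=
          Nat.add_le_add_right (Set.ncard_insert_le _ _) 1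
      _ = 3 := by rw [Set.ncard_singleton]
  -- pairwise distinctness of the clique vertices
  have dne : ∀ u w z : V, ¬ (A ⊆ ({u, w, z} : Set V)) := by
    intro u w z hsub
    have h4 : (4 : ℕ) ≤ ({u, w, z} : Set V).ncard :=
      hcard ▸ Set.ncard_le_ncard hsub (Set.toFinite _)
    have := hle3 u w z
    omega
  have h14 : v1 ≠ v4 := fun h =>
    dne v2 v3 v4 (by rintro t (rfl | rfl | rfl | rfl) <;> simp [h])
  have h24 : v2 ≠ v4 := fun h =>
    dne v1 v3 v4 (by rintro t (rfl | rfl | rfl | rfl) <;> simp [h])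
  have h34 : v3 ≠ v4 := fun h =>
    dne v1 v2 v4 (by rintro t (rfl | rfl | rfl | rfl) <;> simp [h])
  have h13 : v1 ≠ v3 := fun h =>
    dne v2 v3 v4 (by rintro t (rfl | rfl | rfl | rfl) <;> simp [h])
  -- clique adjacencies
  have a13 : G.Adj v1 v3 := hA (by simp [hAdef]) (by simp [hAdef]) h13
  have a34 : G.Adj v3 v4 := hA (by simp [hAdef]) (by simp [hAdef]) h34
  -- at most one neighbour in A
  have two_nbrs : ∀ y z w : V, y ∉ A → z ∈ A → w ∈ A → z ≠ w →
      G.Adj y z → G.Adj y w → False := by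
    intro y z w hy hz hw hzw ayz ayw
    have hsub : ({z, w} : Set V) ⊆ {t ∈ A | G.Adj y t} := by
      rintro t (rfl | rfl) <;> exact ⟨by assumption, by assumption⟩
    have h2 : 2 ≤ ({t ∈ A | G.Adj y t}).ncard := by
      rw [← Set.ncard_pair hzw]
      exact Set.ncard_le_ncard hsub (Set.toFinite _)
    have := hone y hy
    omega
  have ha4 : ¬ G.Adj a v4 := fun h =>
    two_nbrs a v2 v4 haA (by simp [hAdef]) (by simp [hAdef]) h24 ha2 h
  have hb4 : ¬ G.Adj b v4 := fun h =>
    two_nbrs b v2 v4 hbA (by simp [hAdef]) (by simp [hAdef]) h24 hb2 h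
  have hx4 : ¬ G.Adj x v4 := fun h =>
    two_nbrs x v1 v4 hxA (by simp [hAdef]) (by simp [hAdef]) h14 hx1 h
  -- distinctness from A
  have xa : x ≠ a := fun h => ha1 (h ▸ hx1)
  have xb : x ≠ b := fun h => hb1 (h ▸ hx1)
  have av3 : a ≠ v3 := fun h => haA (by simp [hAdef, h])
  have av4 : a ≠ v4 := fun h => haA (by simp [hAdef, h])
  have av1 : a ≠ v1 := fun h => haA (by simp [hAdef, h])
  have bv3 : b ≠ v3 := fun h => hbA (by simp [hAdef, h])
  have bv4 : b ≠ v4 := fun h => hbA (by simp [hAdef, h])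
  have bv1 : b ≠ v1 := fun h => hbA (by simp [hAdef, h])
  have xv3 : x ≠ v3 := fun h => hxA (by simp [hAdef, h])
  have xv4 : x ≠ v4 := fun h => hxA (by simp [hAdef, h])
  have xv2 : x ≠ v2 := fun h => hxA (by simp [hAdef, h])
  by_cases hxa : G.Adj x a
  · by_cases hxb : G.Adj x b
    · -- diamond on x, v2, a, b
      exact hf2 (diamond_emb G x v2 a b hx2 xv2 hab hxa hxb ha2.symm hb2.symm)
    · -- P3 = b - a - x, P2 = v3 - v4
      exact hf1 (p3p2_emb G b a x v3 v4 hab.symm hxa.symm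
        (fun h => hxb h.symm) a34 hb3 hb4 ha3 ha4 hx3 hx4
        xb.symm bv3 bv4 av3 av4 xv3 xv4)
  · by_cases hxb : G.Adj x b
    · -- P3 = a - b - x, P2 = v3 - v4
      exact hf1 (p3p2_emb G a b x v3 v4 hab hxb.symm
        (fun h => hxa h.symm) a34 ha3 ha4 hb3 hb4 hx3 hx4
        xa.symm av3 av4 bv3 bv4 xv3 xv4)
    · -- P3 = x - v1 - v3, P2 = a - b
      exact hf1 (p3p2_emb G x v1 v3 a b hx1 a13 hx3 hab
        hxa hxb (fun h => ha1 h.symm) (fun h => hb1 h.symm)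
        (fun h => ha3 h.symm) (fun h => hb3 h.symm)
        xv3 xa xb av1.symm bv1.symm av3.symm bv3.symm)
end
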